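/- arXiv:2602.07571 — 2 statements merged into one kernel-verified Lean document; each statement's English description precedes it below -/
import Mathlib

section
/- Let N ≥ 1, h = 1/N, Δt > 0, β ∈ ℝ, γ > 0, let m be a grid function with |m(I)| = 1 for every I, and let ṽ be a grid function satisfying (ṽ(I) − m(I))/Δt = −β m(I) × (Δ_h ṽ)(I) − γ m(I) × (m(I) × (Δ_h ṽ)(I)) for every I. Then for every I one has the exact identity |ṽ(I)|^2 = 1 + Δt^2 · | m(I) × ( β (Δ_h ṽ)(I) + γ ( m(I) × (Δ_h ṽ)(I) ) ) |^2; in particular |ṽ(I)| ≥ 1 for every I. -/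
open scoped BigOperators RealInnerProductSpace

noncomputable section

/-- Euclidean 3-space. -/
abbrev E3 : Type := EuclideanSpace ℝ (Fin 3)

/-- Cross product on `E3`. -/
def cross3 (a b : E3) : E3 :=
  (WithLp.equiv 2 (Fin 3 → ℝ)).symm
    ![a 1 * b 2 - a 2 * b 1, a 2 * b 0 - a 0 * b 2, a 0 * b 1 - a 1 * b 0]

/-- Index set of the triply periodic grid. -/
abbrev Idx (N : ℕ) := Fin 3 → ZMod N

/-- Grid functions. -/
abbrev GridFun (N : ℕ) := Idx N → E3

/-- Forward difference in direction `r`. -/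
def fd {N : ℕ} (h : ℝ) (r : Fin 3) (f : GridFun N) (I : Idx N) : E3 :=
  (1 / h) • (f (I + Pi.single r 1) - f I)

/-- Centered average in direction `r`. -/
def ca {N : ℕ} (r : Fin 3) (f : GridFun N) (I : Idx N) : E3 :=
  ((1 : ℝ) / 2) • (f (I + Pi.single r 1) + f I)

/-- Discrete Laplacian. -/
def dlap {N : ℕ} (h : ℝ) (f : GridFun N) (I : Idx N) : E3 :=
  ∑ r : Fin 3, (1 / h ^ 2) • (f (I + Pi.single r 1) - (2 : ℝ) • f I + f (I - Pi.single r 1))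

/-- Squared discrete `L²` norm. -/
def l2sq {N : ℕ} [NeZero N] (h : ℝ) (f : GridFun N) : ℝ :=
  h ^ 3 * ∑ I : Idx N, ‖f I‖ ^ 2

/-- Squared discrete gradient (`H¹` seminorm). -/
def gradsq {N : ℕ} [NeZero N] (h : ℝ) (f : GridFun N) : ℝ :=
  h ^ 3 * ∑ I : Idx N, ∑ r : Fin 3, ‖fd h r f I‖ ^ 2

/-- Discrete `ℓᵖ` norm, for real `p`. -/
def pnorm {N : ℕ} [NeZero N] (h p : ℝ) (f : GridFun N) : ℝ :=
  (h ^ 3 * ∑ I : Idx N, ‖f I‖ ^ p) ^ (1 / p)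

/-- Discrete `ℓ^∞` norm. -/
def inorm {N : ℕ} [NeZero N] (f : GridFun N) : ℝ :=
  ⨆ I : Idx N, ‖f I‖

/-- Discrete `ℓ^∞` norm of the gradient. -/
def ginorm {N : ℕ} [NeZero N] (h : ℝ) (f : GridFun N) : ℝ :=
  ⨆ I : Idx N, ⨆ r : Fin 3, ‖fd h r f I‖


lemma cross3_apply (a b : E3) (i : Fin 3) :
    cross3 a b i = ![a 1 * b 2 - a 2 * b 1, a 2 * b 0 - a 0 * b 2, a 0 * b 1 - a 1 * b 0] i := rfl

lemma cross3_linear (a x y : E3) (β γ : ℝ) :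
    cross3 a (β • x + γ • y) = β • cross3 a x + γ • cross3 a y := by
  ext i
  fin_cases i <;>
    simp [cross3_apply, PiLp.add_apply, PiLp.smul_apply, smul_eq_mul] <;> ring

lemma inner_cross3_self (a b : E3) : ⟪a, cross3 a b⟫ = 0 := by
  simp only [EuclideanSpace.inner_eq_star_dotProduct]
  simp [dotProduct, Fin.sum_univ_three, cross3_apply]
  ring

/-- exact length identity for the intermediate solution, and `|ṽ| ≥ 1`. -/
theorem statement6 (N : ℕ) [NeZero N] (hN : 1 ≤ N) (h Δt β γ : ℝ) (hh : h = 1 / (N : ℝ))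
    (hΔt : 0 < Δt) (hγ : 0 < γ) (m v : GridFun N) (hm : ∀ I, ‖m I‖ = 1)
    (hscheme : ∀ I : Idx N,
      (1 / Δt) • (v I - m I)
        = -(β • cross3 (m I) (dlap h v I))
            - γ • cross3 (m I) (cross3 (m I) (dlap h v I))) :
    ∀ I : Idx N,
      ‖v I‖ ^ 2
          = 1 + Δt ^ 2 *
              ‖cross3 (m I) (β • dlap h v I + γ • cross3 (m I) (dlap h v I))‖ ^ 2 ∧
        1 ≤ ‖v I‖ := by
  intro I
  set b := dlap h v I with hb
  set c := cross3 (m I) (β • b + γ • cross3 (m I) b) with hc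
  have hv : v I = m I - Δt • c := by
    have h1 := hscheme I
    have h2 : -(β • cross3 (m I) (dlap h v I))
        - γ • cross3 (m I) (cross3 (m I) (dlap h v I)) = -c := by
      rw [hc, cross3_linear]; abel
    rw [h2] at h1
    have hΔt' : Δt ≠ 0 := ne_of_gt hΔt
    have := congrArg (fun x : E3 => Δt • x) h1
    simp only [smul_smul, mul_one_div, div_self hΔt', one_smul, smul_neg] at this
    have : v I - m I = -(Δt • c) := this
    linear_combination (norm := module) this
  have hinner : ⟪m I, c⟫ = 0 := inner_cross3_self _ _
  have hsq : ‖v I‖ ^ 2 = 1 + Δt ^ 2 * ‖c‖ ^ 2 := by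
    rw [hv, norm_sub_sq_real, norm_smul, real_inner_smul_right, hinner, hm]
    simp [mul_pow, abs_of_pos hΔt]
  refine ⟨hsq, ?_⟩
  nlinarith [norm_nonneg (v I), norm_nonneg c, sq_nonneg (Δt * ‖c‖)]
end
end

section
/- Let N ≥ 1, h = 1/N, Δt > 0, β ∈ ℝ, γ > 0, let m be a grid function with |m(I)| = 1 for every I, and let ṽ be a grid function satisfying (ṽ(I) − m(I))/Δt = −β m(I) × (Δ_h ṽ)(I) − γ m(I) × (m(I) × (Δ_h ṽ)(I)) for every I. Then (1/2)‖∇_h ṽ‖_2^2 + γ Δt · h^3 Σ_I | m(I) × (Δ_h ṽ)(I) |^2 ≤ (1/2)‖∇_h m‖_2^2. -/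
open scoped BigOperators RealInnerProductSpace

noncomputable section

lemma inner3 (x y : E3) : ⟪x, y⟫ = x 0 * y 0 + x 1 * y 1 + x 2 * y 2 := by
  simp [PiLp.inner_apply, Fin.sum_univ_three, RCLike.inner_apply, mul_comm]

lemma cross3_apply0 (a b : E3) : cross3 a b 0 = a 1 * b 2 - a 2 * b 1 := rfl
lemma cross3_apply1 (a b : E3) : cross3 a b 1 = a 2 * b 0 - a 0 * b 2 := rfl
lemma cross3_apply2 (a b : E3) : cross3 a b 2 = a 0 * b 1 - a 1 * b 0 := rfl

lemma cross_inner_self (a b : E3) : ⟪cross3 a b, b⟫ = 0 := by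
  rw [inner3, cross3_apply0, cross3_apply1, cross3_apply2]; ring

lemma double_cross (m w : E3) :
    ⟪cross3 m (cross3 m w), w⟫ = -‖cross3 m w‖ ^ 2 := by
  have hn : ‖cross3 m w‖ ^ 2 = ⟪cross3 m w, cross3 m w⟫ :=
    (real_inner_self_eq_norm_sq _).symm
  rw [hn, inner3, inner3]
  simp only [cross3_apply0, cross3_apply1, cross3_apply2]
  ring

lemma fd_sub {N : ℕ} (h : ℝ) (r : Fin 3) (f g : GridFun N) (I : Idx N) :
    fd h r (fun J => f J - g J) I = fd h r f I - fd h r g I := by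
  simp only [fd]; rw [← smul_sub]; congr 1; abel

lemma sbp {N : ℕ} [NeZero N] (h : ℝ) (f g : GridFun N) :
    ∑ I : Idx N, ⟪f I, dlap h g I⟫
      = -∑ I : Idx N, ∑ r : Fin 3, ⟪fd h r f I, fd h r g I⟫ := by
  have expand : ∀ I : Idx N, ⟪f I, dlap h g I⟫
      = ∑ r : Fin 3, ((1 / h) * ⟪f I, fd h r g I⟫
          - (1 / h) * ⟪f (I - Pi.single r 1 + Pi.single r 1), fd h r g (I - Pi.single r 1)⟫) := by
    intro I
    simp only [dlap, fd, inner_sum, real_inner_smul_right, inner_sub_right, inner_add_right,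
      inner_smul_right, sub_add_cancel]
    refine Finset.sum_congr rfl fun r _ => ?_
    ring
  rw [Finset.sum_congr rfl fun I _ => expand I]
  rw [Finset.sum_comm]
  have rhs : -∑ I : Idx N, ∑ r : Fin 3, ⟪fd h r f I, fd h r g I⟫
      = ∑ r : Fin 3, ∑ I : Idx N, -⟪fd h r f I, fd h r g I⟫ := by
    rw [← Finset.sum_comm]; simp [Finset.sum_neg_distrib]
  rw [rhs]
  refine Finset.sum_congr rfl fun r _ => ?_
  rw [Finset.sum_sub_distrib]
  have shift := Equiv.sum_comp (Equiv.subRight (Pi.single r 1 : Idx N))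
      (fun J => (1 / h) * ⟪f (J + Pi.single r 1), fd h r g J⟫)
  simp only [Equiv.subRight_apply] at shift
  rw [shift, ← Finset.sum_sub_distrib]
  refine Finset.sum_congr rfl fun I _ => ?_
  simp only [fd, real_inner_smul_left, inner_sub_left]
  ring

/-- one-step energy inequality for the intermediate stage. -/
theorem statement9 (N : ℕ) [NeZero N] (hN : 1 ≤ N) (h Δt β γ : ℝ) (hh : h = 1 / (N : ℝ))
    (hΔt : 0 < Δt) (hγ : 0 < γ) (m v : GridFun N) (hm : ∀ I, ‖m I‖ = 1)
    (hscheme : ∀ I : Idx N,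
      (1 / Δt) • (v I - m I)
        = -(β • cross3 (m I) (dlap h v I))
            - γ • cross3 (m I) (cross3 (m I) (dlap h v I))) :
    (1 / 2) * gradsq h v + γ * Δt * (h ^ 3 * ∑ I : Idx N, ‖cross3 (m I) (dlap h v I)‖ ^ 2)
      ≤ (1 / 2) * gradsq h m := by
  have hNpos : (0 : ℝ) < (N : ℝ) := by exact_mod_cast Nat.lt_of_lt_of_le Nat.zero_lt_one hN
  have hh0 : (0 : ℝ) < h := by rw [hh]; positivity
  -- pointwise identity from the scheme
  have Hpt : ∀ I : Idx N, ⟪v I - m I, dlap h v I⟫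
      = Δt * (γ * ‖cross3 (m I) (dlap h v I)‖ ^ 2) := by
    intro I
    have h1 : ⟪(1 / Δt) • (v I - m I), dlap h v I⟫
        = ⟪-(β • cross3 (m I) (dlap h v I))
            - γ • cross3 (m I) (cross3 (m I) (dlap h v I)), dlap h v I⟫ := by
      rw [hscheme I]
    simp only [real_inner_smul_left, inner_sub_left, inner_neg_left,
      cross_inner_self, double_cross] at h1
    have h2 : ⟪v I - m I, dlap h v I⟫
        = Δt * ((1 / Δt) * ⟪v I - m I, dlap h v I⟫) := by
      field_simp
    rw [h2, inner_sub_left, h1]; ring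
  -- summed identity
  set C : ℝ := ∑ I : Idx N, ‖cross3 (m I) (dlap h v I)‖ ^ 2 with hC
  have Hsum : ∑ I : Idx N, ⟪v I - m I, dlap h v I⟫ = Δt * γ * C := by
    rw [Finset.sum_congr rfl fun I _ => Hpt I, ← Finset.mul_sum, ← Finset.mul_sum, hC]
    ring
  -- summation by parts
  have Hsbp := sbp h (fun J => v J - m J) v
  simp only [fd_sub] at Hsbp
  set Sv : ℝ := ∑ I : Idx N, ∑ r : Fin 3, ‖fd h r v I‖ ^ 2 with hSv
  set Sm : ℝ := ∑ I : Idx N, ∑ r : Fin 3, ‖fd h r m I‖ ^ 2 with hSm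
  set P : ℝ := ∑ I : Idx N, ∑ r : Fin 3, ⟪fd h r m I, fd h r v I⟫ with hP
  have Hself : ∑ I : Idx N, ∑ r : Fin 3,
      ⟪fd h r v I - fd h r m I, fd h r v I⟫ = Sv - P := by
    rw [hSv, hP, ← Finset.sum_sub_distrib]
    refine Finset.sum_congr rfl fun I _ => ?_
    rw [← Finset.sum_sub_distrib]
    refine Finset.sum_congr rfl fun r _ => ?_
    rw [inner_sub_left, real_inner_self_eq_norm_sq]
  rw [Hsum, Hself] at Hsbp
  -- Cauchy–Schwarz + AM-GM bound on P
  have HPle : P ≤ (1 / 2) * Sm + (1 / 2) * Sv := by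
    rw [hP, hSm, hSv]
    have : ∀ I : Idx N, ∑ r : Fin 3, ⟪fd h r m I, fd h r v I⟫
        ≤ ∑ r : Fin 3, ((1 / 2) * ‖fd h r m I‖ ^ 2 + (1 / 2) * ‖fd h r v I‖ ^ 2) := by
      intro I
      refine Finset.sum_le_sum fun r _ => ?_
      have h1 := real_inner_le_norm (fd h r m I) (fd h r v I)
      nlinarith [sq_nonneg (‖fd h r m I‖ - ‖fd h r v I‖)]
    calc P ≤ ∑ I : Idx N, ∑ r : Fin 3,
          ((1 / 2) * ‖fd h r m I‖ ^ 2 + (1 / 2) * ‖fd h r v I‖ ^ 2) :=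
        Finset.sum_le_sum fun I _ => this I
      _ = (1 / 2) * Sm + (1 / 2) * Sv := by
        rw [hSm, hSv]
        simp only [Finset.sum_add_distrib, Finset.mul_sum]
  have key : Δt * γ * C + (1 / 2) * Sv ≤ (1 / 2) * Sm := by nlinarith
  have h3 : (0 : ℝ) < h ^ 3 := pow_pos hh0 3
  have gv : gradsq h v = h ^ 3 * Sv := by simp only [gradsq, hSv]
  have gm : gradsq h m = h ^ 3 * Sm := by simp only [gradsq, hSm]
  rw [gv, gm]
  nlinarith [mul_le_mul_of_nonneg_left key (le_of_lt h3)]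
end
end
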